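/- arXiv:2203.04143 — 2 statements merged into one kernel-verified Lean document; each statement's English description precedes it below -/
import Mathlib

section
/- Let κ > 0 and ρ(x) = sech²(κx). If 0 < C ≤ 2κ², then for every odd function v ∈ H¹(ℝ), ∫_ℝ (v')² dx ≥ C ∫_ℝ ρ v² dx. -/
open Real MeasureTheory Set Filter
open scoped ENNReal

private lemma oh_abs_sinh_le_cosh (y : ℝ) : |Real.sinh y| ≤ Real.cosh y := by
  rw [abs_le]
  constructor <;> nlinarith [Real.cosh_pos y, Real.cosh_sq_sub_sinh_sq y]

private lemma oh_sech_sq_le (y : ℝ) : (1 / Real.cosh y)^2 ≤ 4 * Real.exp (-(2*y)) := by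
  have h1 : Real.exp y / 2 ≤ Real.cosh y := by rw [Real.cosh_eq]; nlinarith [Real.exp_pos (-y)]
  have h2 : (0:ℝ) < Real.exp y := Real.exp_pos y
  have h3 : Real.exp (-(2*y)) = (Real.exp y)⁻¹ * (Real.exp y)⁻¹ := by
    rw [← Real.exp_neg, ← Real.exp_add]; ring_nf
  have hc := Real.cosh_pos y
  rw [h3, div_pow, one_pow, div_le_iff₀ (by positivity)]
  have h4 : Real.exp y * Real.exp y / 4 ≤ Real.cosh y ^2 := by nlinarith
  calc (1:ℝ) = 4 * ((Real.exp y)⁻¹ * (Real.exp y)⁻¹) * (Real.exp y * Real.exp y / 4) := by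
        field_simp
    _ ≤ 4 * ((Real.exp y)⁻¹ * (Real.exp y)⁻¹) * Real.cosh y ^2 := by
        apply mul_le_mul_of_nonneg_left h4 (by positivity)

private lemma oh_hasDerivAt_tanh (a y : ℝ) :
    HasDerivAt (fun s => Real.sinh (a*s) / Real.cosh (a*s)) (a * (1/Real.cosh (a*y))^2) y := by
  have hid : HasDerivAt (fun s : ℝ => a * s) a y := by
    simpa using (hasDerivAt_id y).const_mul a
  have hs : HasDerivAt (fun s => Real.sinh (a*s)) (Real.cosh (a*y) * a) y :=
    (Real.hasDerivAt_sinh (a*y)).comp y hid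
  have hc : HasDerivAt (fun s => Real.cosh (a*s)) (Real.sinh (a*y) * a) y :=
    (Real.hasDerivAt_cosh (a*y)).comp y hid
  have hcc := (Real.cosh_pos (a*y)).ne'
  have := hs.fun_div hc hcc
  refine this.congr_deriv ?_
  have h := Real.cosh_sq_sub_sinh_sq (a*y)
  field_simp
  linear_combination a * h

private lemma oh_hasDerivAt_F (a y : ℝ) : HasDerivAt (fun s => -(a * (1/Real.cosh (a*s))^2))
    (2*a^2 * (1/Real.cosh (a*y))^2 * (Real.sinh (a*y)/Real.cosh (a*y))) y := by
  have hid : HasDerivAt (fun s : ℝ => a * s) a y := by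
    simpa using (hasDerivAt_id y).const_mul a
  have hc : HasDerivAt (fun s => Real.cosh (a*s)) (Real.sinh (a*y) * a) y :=
    (Real.hasDerivAt_cosh (a*y)).comp y hid
  have h2 : HasDerivAt (fun s => (Real.cosh (a*s))^2)
      (2 * Real.cosh (a*y) ^ 1 * (Real.sinh (a*y) * a)) y := by
    simpa using hc.fun_pow 2
  have hne : (Real.cosh (a*y))^2 ≠ 0 := by positivity
  have h3 := h2.inv hne
  have h4 := (h3.const_mul a).neg
  have hcc := (Real.cosh_pos (a*y)).ne'
  have heq : -(a * (-(2 * Real.cosh (a*y) ^ 1 * (Real.sinh (a*y) * a)) / ((Real.cosh (a*y)) ^ 2) ^ 2))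
      = 2*a^2 * (1/Real.cosh (a*y))^2 * (Real.sinh (a*y)/Real.cosh (a*y)) := by
    field_simp
  have h5 : HasDerivAt (fun s => -(a * ((Real.cosh (a*s))^2)⁻¹))
      (2*a^2 * (1/Real.cosh (a*y))^2 * (Real.sinh (a*y)/Real.cosh (a*y))) y := heq ▸ h4
  convert h5 using 2 with s
  rw [one_div, inv_pow]

private lemma oh_sq_half (A : ℝ≥0∞) : (A ^ ((1:ℝ)/2)) ^ (2:ℕ) = A := by
  rw [← ENNReal.rpow_natCast (A ^ ((1:ℝ)/2)) 2, ← ENNReal.rpow_mul]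
  norm_num

/-- core half-line inequality, in `ℝ≥0∞`. -/
private lemma oh_halfline (κ : ℝ) (hκ : 0 < κ) (v : ℝ → ℝ) (hv : Differentiable ℝ v)
    (hv0 : v 0 = 0) (hdv2 : Integrable (fun x => (deriv v x) ^ 2)) :
    ENNReal.ofReal (2*κ^2) *
      ∫⁻ x in Ioi (0:ℝ), ENNReal.ofReal ((1 / Real.cosh (κ * x)) ^ 2 * (v x) ^ 2)
      ≤ ∫⁻ x in Ioi (0:ℝ), ENNReal.ofReal ((deriv v x) ^ 2) := by
  have hmder : Measurable (deriv v) := measurable_deriv v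
  have hcoshC : Continuous fun x : ℝ => Real.cosh (κ*x) :=
    Real.continuous_cosh.comp (continuous_const.mul continuous_id)
  have hsinhC : Continuous fun x : ℝ => Real.sinh (κ*x) :=
    Real.continuous_sinh.comp (continuous_const.mul continuous_id)
  have hQcont : Continuous fun x : ℝ =>
      2*κ^2 * (1/Real.cosh (κ*x))^2 * (Real.sinh (κ*x)/Real.cosh (κ*x)) :=
    ((continuous_const.mul ((continuous_const.div hcoshC
      (fun x => (Real.cosh_pos _).ne')).pow 2))).mul
      (hsinhC.div hcoshC fun x => (Real.cosh_pos _).ne')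
  -- local integrability of |v'|
  have habs_int : ∀ a b : ℝ, IntegrableOn (fun t => |deriv v t|) (Ioo a b) := by
    intro a b
    refine Integrable.mono' (g := fun t => (1 + (deriv v t)^2)/2) ?_ ?_ ?_
    · exact ((integrableOn_const measure_Ioo_lt_top.ne).add hdv2.integrableOn).div_const 2
    · exact (hmder.abs.aestronglyMeasurable)
    · refine ae_of_all _ fun t => ?_
      rw [Real.norm_eq_abs, abs_abs]
      nlinarith [sq_nonneg (|deriv v t| - 1), sq_abs (deriv v t)]
  have hii : ∀ x : ℝ, IntervalIntegrable (deriv v) volume 0 x := by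
    intro x
    rw [intervalIntegrable_iff]
    refine Integrable.mono' (g := fun t => (1 + (deriv v t)^2)/2) ?_ ?_ ?_
    · exact ((integrableOn_const measure_Ioc_lt_top.ne).add hdv2.integrableOn).div_const 2
    · exact hmder.aestronglyMeasurable
    · refine ae_of_all _ fun t => ?_
      rw [Real.norm_eq_abs]
      nlinarith [sq_nonneg (|deriv v t| - 1), sq_abs (deriv v t)]
  have hftc : ∀ x : ℝ, v x = ∫ t in (0:ℝ)..x, deriv v t := by
    intro x
    rw [intervalIntegral.integral_eq_sub_of_hasDerivAt (fun t _ => (hv t).hasDerivAt) (hii x), hv0,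
      sub_zero]
  -- the ENNReal weights
  set W : ℝ → ℝ≥0∞ := fun t => ENNReal.ofReal (Real.cosh (κ*t)^2/κ * (deriv v t)^2) with hW
  set Q : ℝ → ℝ≥0∞ := fun x =>
    ENNReal.ofReal (2*κ^2 * (1/Real.cosh (κ*x))^2 * (Real.sinh (κ*x)/Real.cosh (κ*x))) with hQ
  have hWmeas : Measurable W := by
    apply Measurable.ennreal_ofReal
    exact ((hcoshC.pow 2).div_const κ).measurable.mul (hmder.pow_const 2)
  have hQmeas : Measurable Q := hQcont.measurable.ennreal_ofReal
  -- step S2 : ∫_{(0,x)} κ sech² = tanh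
  have hS2 : ∀ x : ℝ, 0 < x →
      (∫⁻ t in Ioo (0:ℝ) x, ENNReal.ofReal (κ * (1/Real.cosh (κ*t))^2))
        = ENNReal.ofReal (Real.sinh (κ*x)/Real.cosh (κ*x)) := by
    intro x hx
    have hcont : Continuous fun t : ℝ => κ * (1/Real.cosh (κ*t))^2 :=
      continuous_const.mul ((continuous_const.div hcoshC (fun t => (Real.cosh_pos _).ne')).pow 2)
    have hint : ∫ t in (0:ℝ)..x, κ * (1/Real.cosh (κ*t))^2
        = Real.sinh (κ*x)/Real.cosh (κ*x) - Real.sinh (κ*0)/Real.cosh (κ*0) :=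
      intervalIntegral.integral_eq_sub_of_hasDerivAt (fun t _ => oh_hasDerivAt_tanh κ t)
        (hcont.intervalIntegrable 0 x)
    rw [mul_zero, Real.sinh_zero, Real.cosh_zero, zero_div, sub_zero] at hint
    rw [intervalIntegral.integral_of_le hx.le, integral_Ioc_eq_integral_Ioo] at hint
    rw [← hint, ← ofReal_integral_eq_lintegral_ofReal]
    · exact hcont.integrableOn_Ioc.mono_set Ioo_subset_Ioc_self
    · exact ae_of_all _ fun t => by positivity
  -- step S3 : tail integral of Q
  have hS3 : ∀ t : ℝ, 0 < t →
      (∫⁻ x in Ioi t, Q x) = ENNReal.ofReal (κ * (1/Real.cosh (κ*t))^2) := by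
    intro t ht
    have hfd : ∀ x ∈ Ioi t, HasDerivAt (fun s => -(κ * (1/Real.cosh (κ*s))^2))
        (2*κ^2 * (1/Real.cosh (κ*x))^2 * (Real.sinh (κ*x)/Real.cosh (κ*x))) x :=
      fun x _ => oh_hasDerivAt_F κ x
    have hcontF : ContinuousWithinAt (fun s => -(κ * (1/Real.cosh (κ*s))^2)) (Ici t) t :=
      ((oh_hasDerivAt_F κ t).continuousAt).continuousWithinAt
    have hIntQ : IntegrableOn
        (fun x => 2*κ^2 * (1/Real.cosh (κ*x))^2 * (Real.sinh (κ*x)/Real.cosh (κ*x))) (Ioi t) := by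
      refine Integrable.mono' (g := fun x => 8*κ^2 * Real.exp (-(2*κ) * x)) ?_ ?_ ?_
      · exact (exp_neg_integrableOn_Ioi t (by positivity)).const_mul _
      · exact hQcont.aestronglyMeasurable
      · refine ae_of_all _ fun x => ?_
        have h1 : |Real.sinh (κ*x)/Real.cosh (κ*x)| ≤ 1 := by
          rw [abs_div, abs_of_pos (Real.cosh_pos _), div_le_one (Real.cosh_pos _)]
          exact oh_abs_sinh_le_cosh _
        have h2 : (1/Real.cosh (κ*x))^2 ≤ 4 * Real.exp (-(2*(κ*x))) := oh_sech_sq_le (κ*x)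
        rw [Real.norm_eq_abs]
        calc |2*κ^2 * (1/Real.cosh (κ*x))^2 * (Real.sinh (κ*x)/Real.cosh (κ*x))|
            = 2*κ^2 * (1/Real.cosh (κ*x))^2 * |Real.sinh (κ*x)/Real.cosh (κ*x)| := by
              rw [abs_mul, abs_of_nonneg (by positivity : (0:ℝ) ≤ 2*κ^2 * (1/Real.cosh (κ*x))^2)]
          _ ≤ 2*κ^2 * (1/Real.cosh (κ*x))^2 * 1 := by
              apply mul_le_mul_of_nonneg_left h1 (by positivity)
          _ ≤ 2*κ^2 * (4 * Real.exp (-(2*(κ*x)))) * 1 := by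
              apply mul_le_mul_of_nonneg_right ?_ one_pos.le
              apply mul_le_mul_of_nonneg_left h2 (by positivity)
          _ = 8*κ^2 * Real.exp (-(2*κ) * x) := by ring_nf
    have htend : Tendsto (fun s => -(κ * (1/Real.cosh (κ*s))^2)) atTop (nhds 0) := by
      have hexp : Tendsto (fun s : ℝ => κ * (4 * Real.exp (-(2*(κ*s))))) atTop (nhds 0) := by
        have h1 : Tendsto (fun s : ℝ => 2 * (κ * s)) atTop atTop := by
          apply Tendsto.const_mul_atTop (by norm_num : (0:ℝ) < 2)
          exact Tendsto.const_mul_atTop hκ tendsto_id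
        have h2 : Tendsto (fun s : ℝ => Real.exp (-(2*(κ*s)))) atTop (nhds 0) := by
          have h3 := Real.tendsto_exp_neg_atTop_nhds_zero.comp h1
          simpa [Function.comp_def] using h3
        have := (h2.const_mul (4:ℝ)).const_mul κ
        simpa using this
      have h0 : Tendsto (fun s : ℝ => κ * (1/Real.cosh (κ*s))^2) atTop (nhds 0) := by
        apply squeeze_zero (fun s => by positivity) (fun s => ?_) hexp
        exact mul_le_mul_of_nonneg_left (oh_sech_sq_le (κ*s)) hκ.le
      simpa using h0.neg
    have hkey := integral_Ioi_of_hasDerivAt_of_tendsto hcontF hfd hIntQ htend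
    rw [zero_sub, neg_neg] at hkey
    rw [hQ, ← ofReal_integral_eq_lintegral_ofReal hIntQ]
    · rw [hkey]
    · refine (ae_restrict_iff' measurableSet_Ioi).2 (ae_of_all _ fun x hx => ?_)
      have hxpos : 0 < x := lt_trans ht hx
      have hsn : 0 ≤ Real.sinh (κ*x) := Real.sinh_nonneg_iff.2 (by positivity)
      positivity
  -- step S1 : pointwise weighted Cauchy-Schwarz
  have hS1 : ∀ x : ℝ, 0 < x → ENNReal.ofReal ((v x)^2)
      ≤ ENNReal.ofReal (Real.sinh (κ*x)/Real.cosh (κ*x)) * ∫⁻ t in Ioo (0:ℝ) x, W t := by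
    intro x hx
    have hvx : |v x| ≤ ∫ t in Ioo (0:ℝ) x, |deriv v t| := by
      rw [hftc x]
      calc |∫ t in (0:ℝ)..x, deriv v t| ≤ ∫ t in (0:ℝ)..x, |deriv v t| :=
            intervalIntegral.abs_integral_le_integral_abs hx.le
        _ = ∫ t in Ioc (0:ℝ) x, |deriv v t| := intervalIntegral.integral_of_le hx.le
        _ = ∫ t in Ioo (0:ℝ) x, |deriv v t| := integral_Ioc_eq_integral_Ioo
    have hOF : ENNReal.ofReal (∫ t in Ioo (0:ℝ) x, |deriv v t|)
        = ∫⁻ t in Ioo (0:ℝ) x, ENNReal.ofReal |deriv v t| :=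
      ofReal_integral_eq_lintegral_ofReal (habs_int 0 x) (ae_of_all _ fun t => abs_nonneg _)
    set f : ℝ → ℝ≥0∞ := fun t => ENNReal.ofReal (Real.sqrt κ * (1/Real.cosh (κ*t))) with hf
    set g : ℝ → ℝ≥0∞ := fun t => ENNReal.ofReal (Real.cosh (κ*t)/Real.sqrt κ * |deriv v t|)
      with hg
    have hsq : (0:ℝ) < Real.sqrt κ := Real.sqrt_pos.2 hκ
    have hfg : ∀ t, ENNReal.ofReal |deriv v t| = f t * g t := by
      intro t
      rw [hf, hg, ← ENNReal.ofReal_mul (by positivity)]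
      congr 1
      have hc := (Real.cosh_pos (κ*t)).ne'
      field_simp
    have hconj : Real.HolderConjugate 2 2 := by
      exact Real.HolderConjugate.two_two
    have hfm : AEMeasurable f (volume.restrict (Ioo (0:ℝ) x)) :=
      ((continuous_const.mul (continuous_const.div hcoshC
        (fun t => (Real.cosh_pos _).ne'))).measurable.ennreal_ofReal).aemeasurable
    have hgm : AEMeasurable g (volume.restrict (Ioo (0:ℝ) x)) :=
      (((hcoshC.measurable.div_const _).mul hmder.abs).ennreal_ofReal).aemeasurable
    have hH := ENNReal.lintegral_mul_le_Lp_mul_Lq (volume.restrict (Ioo (0:ℝ) x)) hconj hfm hgm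
    simp only [Pi.mul_apply] at hH
    have hf2 : ∀ t : ℝ, f t ^ (2:ℝ) = ENNReal.ofReal (κ * (1/Real.cosh (κ*t))^2) := by
      intro t
      rw [hf, show (2:ℝ) = ((2:ℕ):ℝ) by norm_num, ENNReal.rpow_natCast, pow_two,
        ← ENNReal.ofReal_mul (by positivity)]
      congr 1
      have hss : Real.sqrt κ * Real.sqrt κ = κ := Real.mul_self_sqrt hκ.le
      calc Real.sqrt κ * (1/Real.cosh (κ*t)) * (Real.sqrt κ * (1/Real.cosh (κ*t)))
          = (Real.sqrt κ * Real.sqrt κ) * (1/Real.cosh (κ*t))^2 := by ring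
        _ = κ * (1/Real.cosh (κ*t))^2 := by rw [hss]
    have hg2 : ∀ t : ℝ, g t ^ (2:ℝ) = W t := by
      intro t
      rw [hg, hW, show (2:ℝ) = ((2:ℕ):ℝ) by norm_num, ENNReal.rpow_natCast, pow_two,
        ← ENNReal.ofReal_mul (by positivity)]
      congr 1
      have hss : Real.sqrt κ * Real.sqrt κ = κ := Real.mul_self_sqrt hκ.le
      calc Real.cosh (κ*t)/Real.sqrt κ * |deriv v t| * (Real.cosh (κ*t)/Real.sqrt κ * |deriv v t|)
          = Real.cosh (κ*t)^2/(Real.sqrt κ * Real.sqrt κ) * (|deriv v t| * |deriv v t|) := by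
            ring
        _ = Real.cosh (κ*t)^2/κ * (deriv v t)^2 := by rw [hss, abs_mul_abs_self]; ring
    rw [lintegral_congr hf2, lintegral_congr hg2, hS2 x hx] at hH
    rw [← sq_abs (v x), ← Real.rpow_natCast |v x| 2]
    calc ENNReal.ofReal (|v x| ^ ((2:ℕ):ℝ))
        = (ENNReal.ofReal |v x|) ^ (2:ℕ) := by
          rw [Real.rpow_natCast, ENNReal.ofReal_pow (abs_nonneg _)]
      _ ≤ (ENNReal.ofReal (∫ t in Ioo (0:ℝ) x, |deriv v t|)) ^ (2:ℕ) :=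
          pow_le_pow_left' (ENNReal.ofReal_le_ofReal hvx) 2
      _ = (∫⁻ t in Ioo (0:ℝ) x, ENNReal.ofReal |deriv v t|) ^ (2:ℕ) := by rw [hOF]
      _ = (∫⁻ t in Ioo (0:ℝ) x, f t * g t) ^ (2:ℕ) := by
          congr 1
          exact lintegral_congr hfg
      _ ≤ ((ENNReal.ofReal (Real.sinh (κ*x)/Real.cosh (κ*x))) ^ ((1:ℝ)/2)
            * (∫⁻ t in Ioo (0:ℝ) x, W t) ^ ((1:ℝ)/2)) ^ (2:ℕ) :=
          pow_le_pow_left' hH 2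
      _ = ENNReal.ofReal (Real.sinh (κ*x)/Real.cosh (κ*x)) * ∫⁻ t in Ioo (0:ℝ) x, W t := by
          rw [mul_pow, oh_sq_half, oh_sq_half]
  -- pointwise bound for the integrand
  have hpt : ∀ x ∈ Ioi (0:ℝ),
      ENNReal.ofReal (2*κ^2) * ENNReal.ofReal ((1 / Real.cosh (κ * x)) ^ 2 * (v x) ^ 2)
        ≤ Q x * ∫⁻ t in Ioo (0:ℝ) x, W t := by
    intro x hx
    rw [ENNReal.ofReal_mul (by positivity : (0:ℝ) ≤ (1 / Real.cosh (κ * x)) ^ 2),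
      ← mul_assoc, ← ENNReal.ofReal_mul (by positivity : (0:ℝ) ≤ 2*κ^2)]
    calc ENNReal.ofReal (2*κ^2 * (1 / Real.cosh (κ * x)) ^ 2) * ENNReal.ofReal ((v x)^2)
        ≤ ENNReal.ofReal (2*κ^2 * (1 / Real.cosh (κ * x)) ^ 2) *
            (ENNReal.ofReal (Real.sinh (κ*x)/Real.cosh (κ*x)) * ∫⁻ t in Ioo (0:ℝ) x, W t) :=
          mul_le_mul_right (hS1 x hx) _
      _ = Q x * ∫⁻ t in Ioo (0:ℝ) x, W t := by
          rw [hQ, ← mul_assoc, ← ENNReal.ofReal_mul (by positivity : (0:ℝ) ≤ 2*κ^2 * (1 / Real.cosh (κ * x)) ^ 2)]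
  -- Tonelli
  have htonelli : (∫⁻ x in Ioi (0:ℝ), Q x * ∫⁻ t in Ioo (0:ℝ) x, W t)
      = ∫⁻ t in Ioi (0:ℝ), (∫⁻ x in Ioi t, Q x) * W t := by
    set S : Set (ℝ × ℝ) := {p : ℝ × ℝ | 0 < p.2 ∧ p.2 < p.1} with hSdef
    have hSmeas : MeasurableSet S :=
      (measurableSet_lt measurable_const measurable_snd).inter
        (measurableSet_lt measurable_snd measurable_fst)
    set K : ℝ × ℝ → ℝ≥0∞ := S.indicator (fun p => Q p.1 * W p.2) with hK
    have hKmeas : Measurable K :=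
      ((hQmeas.comp measurable_fst).mul (hWmeas.comp measurable_snd)).indicator hSmeas
    have h1 : ∀ x : ℝ, (∫⁻ t, K (x, t))
        = (Ioi (0:ℝ)).indicator (fun x => Q x * ∫⁻ t in Ioo (0:ℝ) x, W t) x := by
      intro x
      by_cases hx : x ∈ Ioi (0:ℝ)
      · rw [Set.indicator_of_mem hx]
        have hKt : ∀ t, K (x, t) = (Ioo (0:ℝ) x).indicator (fun t => Q x * W t) t := by
          intro t
          rw [hK]
          by_cases ht : t ∈ Ioo (0:ℝ) x
          · rw [Set.indicator_of_mem ht, Set.indicator_of_mem]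
            exact ⟨ht.1, ht.2⟩
          · rw [Set.indicator_of_notMem ht, Set.indicator_of_notMem]
            exact fun hmem => ht ⟨hmem.1, hmem.2⟩
        rw [lintegral_congr hKt, lintegral_indicator measurableSet_Ioo,
          lintegral_const_mul _ hWmeas]
      · rw [Set.indicator_of_notMem hx]
        have hKt : ∀ t, K (x, t) = 0 := by
          intro t
          rw [hK]
          exact Set.indicator_of_notMem
            (fun hmem => hx (mem_Ioi.2 (lt_trans hmem.1 hmem.2))) _
        simp [lintegral_congr hKt]
    have h2 : ∀ t : ℝ, (∫⁻ x, K (x, t))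
        = (Ioi (0:ℝ)).indicator (fun t => (∫⁻ x in Ioi t, Q x) * W t) t := by
      intro t
      by_cases ht : t ∈ Ioi (0:ℝ)
      · rw [Set.indicator_of_mem ht]
        have hKx : ∀ x, K (x, t) = (Ioi t).indicator (fun x => Q x * W t) x := by
          intro x
          rw [hK]
          by_cases hx : x ∈ Ioi t
          · rw [Set.indicator_of_mem hx, Set.indicator_of_mem]
            exact ⟨ht, hx⟩
          · rw [Set.indicator_of_notMem hx, Set.indicator_of_notMem]
            exact fun hmem => hx hmem.2
        rw [lintegral_congr hKx, lintegral_indicator measurableSet_Ioi,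
          lintegral_mul_const _ hQmeas]
      · rw [Set.indicator_of_notMem ht]
        have hKx : ∀ x, K (x, t) = 0 := by
          intro x
          rw [hK]
          exact Set.indicator_of_notMem (fun hmem => ht (mem_Ioi.2 hmem.1)) _
        simp [lintegral_congr hKx]
    calc ∫⁻ x in Ioi (0:ℝ), Q x * ∫⁻ t in Ioo (0:ℝ) x, W t
        = ∫⁻ x, (Ioi (0:ℝ)).indicator (fun x => Q x * ∫⁻ t in Ioo (0:ℝ) x, W t) x :=
          (lintegral_indicator measurableSet_Ioi _).symm
      _ = ∫⁻ x, ∫⁻ t, K (x, t) := by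
          refine lintegral_congr fun x => (h1 x).symm
      _ = ∫⁻ t, ∫⁻ x, K (x, t) := lintegral_lintegral_swap hKmeas.aemeasurable
      _ = ∫⁻ t, (Ioi (0:ℝ)).indicator (fun t => (∫⁻ x in Ioi t, Q x) * W t) t :=
          lintegral_congr fun t => h2 t
      _ = ∫⁻ t in Ioi (0:ℝ), (∫⁻ x in Ioi t, Q x) * W t :=
          lintegral_indicator measurableSet_Ioi _
  -- put everything together
  calc ENNReal.ofReal (2*κ^2) *
        ∫⁻ x in Ioi (0:ℝ), ENNReal.ofReal ((1 / Real.cosh (κ * x)) ^ 2 * (v x) ^ 2)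
      = ∫⁻ x in Ioi (0:ℝ),
          ENNReal.ofReal (2*κ^2) * ENNReal.ofReal ((1 / Real.cosh (κ * x)) ^ 2 * (v x) ^ 2) :=
        (lintegral_const_mul' _ _ ENNReal.ofReal_ne_top).symm
    _ ≤ ∫⁻ x in Ioi (0:ℝ), Q x * ∫⁻ t in Ioo (0:ℝ) x, W t :=
        lintegral_mono_ae ((ae_restrict_iff' measurableSet_Ioi).2 (ae_of_all _ hpt))
    _ = ∫⁻ t in Ioi (0:ℝ), (∫⁻ x in Ioi t, Q x) * W t := htonelli
    _ = ∫⁻ t in Ioi (0:ℝ), ENNReal.ofReal ((deriv v t) ^ 2) := by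
        refine setLIntegral_congr_fun measurableSet_Ioi (fun t ht => ?_)
        rw [hS3 t ht, hW, ← ENNReal.ofReal_mul (by positivity)]
        congr 1
        have hc := (Real.cosh_pos (κ*t)).ne'
        field_simp

/-- If 0 < C ≤ 2κ² and ρ(x) = sech²(κx), then ∫ (v')² ≥ C ∫ ρ v² for every odd v ∈ H¹(ℝ). -/
theorem odd_hardy_inequality (κ C : ℝ) (hκ : 0 < κ) (hC0 : 0 < C) (hC : C ≤ 2 * κ ^ 2)
    (v : ℝ → ℝ) (hv : Differentiable ℝ v)
    (hodd : ∀ x, v (-x) = -v x)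
    (hv2 : Integrable (fun x => (v x) ^ 2))
    (hdv2 : Integrable (fun x => (deriv v x) ^ 2)) :
    ∫ x, (deriv v x) ^ 2 ≥ C * ∫ x, (1 / Real.cosh (κ * x)) ^ 2 * (v x) ^ 2 := by
  have hmder : Measurable (deriv v) := measurable_deriv v
  have hv0 : v 0 = 0 := by
    have := hodd 0
    rw [neg_zero] at this
    linarith
  have hcoshC : Continuous fun x : ℝ => Real.cosh (κ*x) :=
    Real.continuous_cosh.comp (continuous_const.mul continuous_id)
  have hρcont : Continuous fun x : ℝ => (1 / Real.cosh (κ * x)) ^ 2 * (v x) ^ 2 :=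
    ((continuous_const.div hcoshC (fun x => (Real.cosh_pos _).ne')).pow 2).mul
      (hv.continuous.pow 2)
  have hρint : Integrable (fun x : ℝ => (1 / Real.cosh (κ * x)) ^ 2 * (v x) ^ 2) := by
    refine Integrable.mono' hv2 hρcont.aestronglyMeasurable (ae_of_all _ fun x => ?_)
    rw [Real.norm_eq_abs]
    have h1 : (1 / Real.cosh (κ * x)) ≤ 1 := by
      rw [div_le_one (Real.cosh_pos _)]
      exact Real.one_le_cosh _
    have h2 : (0:ℝ) ≤ 1 / Real.cosh (κ * x) := by positivity
    have h3 : (1 / Real.cosh (κ * x))^2 ≤ 1 := by nlinarith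
    rw [abs_of_nonneg (by positivity)]
    nlinarith [sq_nonneg (v x)]
  have hd_even : ∀ x, deriv v (-x) = deriv v x := by
    intro x
    have h1 : HasDerivAt (fun y : ℝ => v (-y)) (-(deriv v x)) x := by
      have hneg := ((hv x).hasDerivAt).neg
      have hfun : (fun y : ℝ => -v y) = fun y : ℝ => v (-y) := funext fun y => (hodd y).symm
      rw [← hfun]; exact hneg
    have h2 : HasDerivAt (fun y : ℝ => v (-y)) (deriv v (-x) * (-1)) x :=
      HasDerivAt.comp x ((hv (-x)).hasDerivAt) (hasDerivAt_neg x)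
    have := h1.unique h2
    linarith
  have hρ_even : ∀ x : ℝ, (1 / Real.cosh (κ * (-x))) ^ 2 * (v (-x)) ^ 2
      = (1 / Real.cosh (κ * x)) ^ 2 * (v x) ^ 2 := by
    intro x
    rw [hodd x, mul_neg, Real.cosh_neg]
    ring
  have hsym : ∀ (f : ℝ → ℝ), Integrable f → (∀ x, f (-x) = f x) →
      ∫ x, f x = 2 * ∫ x in Ioi (0:ℝ), f x := by
    intro f hf he
    have h1 : ∫ x in Iic (0:ℝ), f x = ∫ x in Ioi (0:ℝ), f x := by
      have := integral_comp_neg_Ioi (0:ℝ) f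
      rw [neg_zero] at this
      rw [← this]
      exact integral_congr_ae (ae_of_all _ fun x => (he x).symm) |>.symm
    rw [← intervalIntegral.integral_Iic_add_Ioi hf.integrableOn hf.integrableOn, h1]
    ring
  have key := oh_halfline κ hκ v hv hv0 hdv2
  have hIρ : ∫ x in Ioi (0:ℝ), (1 / Real.cosh (κ * x)) ^ 2 * (v x) ^ 2
      = (∫⁻ x in Ioi (0:ℝ), ENNReal.ofReal ((1 / Real.cosh (κ * x)) ^ 2 * (v x) ^ 2)).toReal := by
    rw [integral_eq_lintegral_of_nonneg_ae (ae_of_all _ fun x => by positivity)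
      hρcont.aestronglyMeasurable.restrict]
  have hId : ∫ x in Ioi (0:ℝ), (deriv v x) ^ 2
      = (∫⁻ x in Ioi (0:ℝ), ENNReal.ofReal ((deriv v x) ^ 2)).toReal := by
    rw [integral_eq_lintegral_of_nonneg_ae (ae_of_all _ fun x => by positivity)
      ((hmder.pow_const 2).aestronglyMeasurable.restrict)]
  have hfin : (∫⁻ x in Ioi (0:ℝ), ENNReal.ofReal ((deriv v x) ^ 2)) ≠ ⊤ := by
    have h1 : (∫⁻ x, ENNReal.ofReal ((deriv v x) ^ 2)) < ⊤ := hdv2.lintegral_lt_top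
    exact ne_of_lt (lt_of_le_of_lt (lintegral_mono' Measure.restrict_le_self le_rfl) h1)
  have h2κ : 2*κ^2 * ∫ x in Ioi (0:ℝ), (1 / Real.cosh (κ * x)) ^ 2 * (v x) ^ 2
      ≤ ∫ x in Ioi (0:ℝ), (deriv v x) ^ 2 := by
    rw [hIρ, hId]
    calc 2*κ^2 * (∫⁻ x in Ioi (0:ℝ),
          ENNReal.ofReal ((1 / Real.cosh (κ * x)) ^ 2 * (v x) ^ 2)).toReal
        = (ENNReal.ofReal (2*κ^2) * ∫⁻ x in Ioi (0:ℝ),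
            ENNReal.ofReal ((1 / Real.cosh (κ * x)) ^ 2 * (v x) ^ 2)).toReal := by
          rw [ENNReal.toReal_mul, ENNReal.toReal_ofReal (by positivity)]
      _ ≤ (∫⁻ x in Ioi (0:ℝ), ENNReal.ofReal ((deriv v x) ^ 2)).toReal :=
          ENNReal.toReal_mono hfin key
  have e1 : ∫ x, (1 / Real.cosh (κ * x)) ^ 2 * (v x) ^ 2
      = 2 * ∫ x in Ioi (0:ℝ), (1 / Real.cosh (κ * x)) ^ 2 * (v x) ^ 2 :=
    hsym _ hρint hρ_even
  have e2 : ∫ x, (deriv v x) ^ 2 = 2 * ∫ x in Ioi (0:ℝ), (deriv v x) ^ 2 :=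
    hsym _ hdv2 (fun x => by rw [hd_even x])
  have hge0 : 0 ≤ ∫ x in Ioi (0:ℝ), (1 / Real.cosh (κ * x)) ^ 2 * (v x) ^ 2 :=
    setIntegral_nonneg measurableSet_Ioi (fun x _ => by positivity)
  rw [ge_iff_le, e1, e2]
  nlinarith [h2κ, hge0, hC]
end

section
/- Suppose there exists γ ∈ (0,1) such that for every odd v ∈ H¹(ℝ), (1−γ)∫(v')² ≥ −(1/2)∫ x P₂'(x) v² dx, where P₂' is continuous with |P₂'(x)| ≤ C e^{−5·2κ|x|} (i.e., P₂' ∈ 𝒴). If additionally a continuous function Q satisfies |x·Q(x)| ≤ ε·sech⁴(κx) pointwise with ε ≤ γ·2κ²·(some explicit constant), then for every odd v ∈ H¹, (1−γ/2)∫(v')² ≥ −(1/2)∫ x(P₂'(x)+Q(x)) v² dx. -/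
set_option maxHeartbeats 1000000
open Real MeasureTheory Filter Topology Set

-- derivative of odd function is even
lemma deriv_even_of_odd (v : ℝ → ℝ) (hv : Differentiable ℝ v)
    (hodd : ∀ x, v (-x) = -v x) (x : ℝ) : deriv v (-x) = deriv v x := by
  have h1 : HasDerivAt (fun y : ℝ => v (-y)) (deriv v (-x) * (-1)) x :=
    ((hv (-x)).hasDerivAt).comp x (hasDerivAt_neg x)
  have h2 : (fun y : ℝ => v (-y)) = fun y => -v y := funext hodd
  rw [h2] at h1
  have h3 : HasDerivAt (fun y => -v y) (-(deriv v x)) x := ((hv x).hasDerivAt).neg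
  have := h1.unique h3
  linarith

lemma odd_zero (v : ℝ → ℝ) (hodd : ∀ x, v (-x) = -v x) : v 0 = 0 := by
  have := hodd 0; simp at this; linarith


section Poincare
variable (κ : ℝ) (v : ℝ → ℝ)

-- G and its derivative
lemma hasDerivAt_G (hκ : 0 < κ) (hv : Differentiable ℝ v) {x : ℝ} (hx : x ≠ 0) :
    HasDerivAt (fun y => 2 * κ / Real.sinh (2 * κ * y) * (v y) ^ 2)
      (-(4 * κ ^ 2 * Real.cosh (2 * κ * x)) / (Real.sinh (2 * κ * x)) ^ 2 * (v x) ^ 2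
        + 2 * κ / Real.sinh (2 * κ * x) * (2 * v x * deriv v x)) x := by
  have hsx : Real.sinh (2 * κ * x) ≠ 0 :=
    Real.sinh_ne_zero.mpr (mul_ne_zero (by positivity) hx)
  have hin : HasDerivAt (fun y : ℝ => 2 * κ * y) (2 * κ) x := by
    simpa using (hasDerivAt_id x).const_mul (2 * κ)
  have hsinh : HasDerivAt (fun y => Real.sinh (2 * κ * y)) (Real.cosh (2 * κ * x) * (2 * κ)) x :=
    (Real.hasDerivAt_sinh (2 * κ * x)).comp x hin
  have h1 : HasDerivAt (fun y => 2 * κ / Real.sinh (2 * κ * y))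
      (-(4 * κ ^ 2 * Real.cosh (2 * κ * x)) / (Real.sinh (2 * κ * x)) ^ 2) x := by
    have := (hasDerivAt_const x (2 * κ)).div hsinh hsx
    exact this.congr_deriv (by ring)
  have h2 : HasDerivAt (fun y => (v y) ^ 2) (2 * v x * deriv v x) x := by
    have := ((hv x).hasDerivAt).pow 2
    exact this.congr_deriv (by norm_num)
  exact h1.mul h2

-- pointwise inequality : f ≥ G' for x ≠ 0
lemma pointwise_ineq (hκ : 0 < κ) {x : ℝ} (hx : x ≠ 0) :
    ∀ a b : ℝ,
      -(4 * κ ^ 2 * Real.cosh (2 * κ * x)) / (Real.sinh (2 * κ * x)) ^ 2 * a ^ 2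
        + 2 * κ / Real.sinh (2 * κ * x) * (2 * a * b)
      ≤ b ^ 2 - 2 * κ ^ 2 * ((1 / Real.cosh (κ * x)) ^ 2 * a ^ 2) := by
  intro a b
  have hs : Real.sinh (κ * x) ≠ 0 :=
    Real.sinh_ne_zero.mpr (mul_ne_zero hκ.ne' hx)
  have hc : Real.cosh (κ * x) ≠ 0 := (Real.cosh_pos _).ne'
  have h2 : (2 : ℝ) * κ * x = 2 * (κ * x) := by ring
  have hid : -(4 * κ ^ 2 * Real.cosh (2 * κ * x)) / (Real.sinh (2 * κ * x)) ^ 2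
      + (2 * κ / Real.sinh (2 * κ * x)) ^ 2 = -(2 * κ ^ 2) * (1 / Real.cosh (κ * x)) ^ 2 := by
    rw [h2, Real.sinh_two_mul, Real.cosh_two_mul]
    field_simp
    linear_combination (-4) *
      Real.cosh_sq_sub_sinh_sq (κ * x)
  have hsq : (b - 2 * κ / Real.sinh (2 * κ * x) * a) ^ 2 ≥ 0 := sq_nonneg _
  nlinarith [hid, hsq]

end Poincare

lemma poincare_odd (κ : ℝ) (v : ℝ → ℝ) (hκ : 0 < κ) (hv : Differentiable ℝ v)
    (hodd : ∀ x, v (-x) = -v x)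
    (hv2 : Integrable (fun x => (v x) ^ 2))
    (hdv2 : Integrable (fun x => (deriv v x) ^ 2)) :
    2 * κ ^ 2 * ∫ x, (1 / Real.cosh (κ * x)) ^ 2 * (v x) ^ 2 ≤ ∫ x, (deriv v x) ^ 2 := by
  set f : ℝ → ℝ := fun x => (deriv v x) ^ 2 - 2 * κ ^ 2 * ((1 / Real.cosh (κ * x)) ^ 2 * (v x) ^ 2)
    with hf_def
  have hvc : Continuous v := hv.continuous
  have hρc : Continuous fun x : ℝ => (1 / Real.cosh (κ * x)) ^ 2 * (v x) ^ 2 := by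
    apply Continuous.mul _ (hvc.pow 2)
    exact ((continuous_const.div (Real.continuous_cosh.comp (continuous_const.mul continuous_id))
      (fun x => (Real.cosh_pos _).ne')).pow 2)
  have hρ_int : Integrable (fun x : ℝ => (1 / Real.cosh (κ * x)) ^ 2 * (v x) ^ 2) := by
    refine hv2.mono' hρc.aestronglyMeasurable (Filter.Eventually.of_forall fun x => ?_)
    have h1 : (1:ℝ) ≤ Real.cosh (κ * x) := Real.one_le_cosh _
    have h2 : (0:ℝ) < Real.cosh (κ * x) := Real.cosh_pos _
    have h3 : (1 / Real.cosh (κ * x)) ^ 2 ≤ 1 := by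
      rw [div_pow, one_pow]
      rw [div_le_one (by positivity)]
      nlinarith
    rw [Real.norm_eq_abs, abs_of_nonneg (by positivity : (0:ℝ) ≤ (1 / Real.cosh (κ * x)) ^ 2 * (v x) ^ 2)]
    nlinarith [sq_nonneg (v x)]
  have hf_int : Integrable f := hdv2.sub (hρ_int.const_mul _)
  have hmeasd : Measurable (deriv v) := measurable_deriv v
  have hv0 : v 0 = 0 := odd_zero v hodd
  -- main claim
  have key : 0 ≤ ∫ x, f x := by
    set G : ℝ → ℝ := fun y => 2 * κ / Real.sinh (2 * κ * y) * (v y) ^ 2 with hG_def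
    set G' : ℝ → ℝ := fun y =>
      -(4 * κ ^ 2 * Real.cosh (2 * κ * y)) / (Real.sinh (2 * κ * y)) ^ 2 * (v y) ^ 2
        + 2 * κ / Real.sinh (2 * κ * y) * (2 * v y * deriv v y) with hG'_def
    have hG'meas : Measurable G' := by
      apply Measurable.add
      · exact (Measurable.div (Continuous.measurable (by fun_prop))
          (Continuous.measurable (by fun_prop))).mul ((hvc.pow 2).measurable)
      · exact (Measurable.div (Continuous.measurable (by fun_prop))
          (Continuous.measurable (by fun_prop))).mul
          ((measurable_const.mul hvc.measurable).mul hmeasd)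
    -- interval bound via FTC
    have interval_bd : ∀ δ R : ℝ, 0 < δ → δ ≤ R → G R - G δ ≤ ∫ y in δ..R, f y := by
      intro δ R hδ hδR
      have hIcc : ∀ y ∈ Set.Icc δ R, y ≠ 0 := fun y hy => (lt_of_lt_of_le hδ hy.1).ne'
      have hsδ : 0 < Real.sinh (2 * κ * δ) := by
        rw [Real.sinh_pos_iff]; positivity
      set MA : ℝ := 4 * κ ^ 2 * Real.cosh (2 * κ * R) / (Real.sinh (2 * κ * δ)) ^ 2 with hMA
      set MB : ℝ := 2 * κ / Real.sinh (2 * κ * δ) with hMB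
      have hMA0 : 0 ≤ MA := by
        have := (Real.cosh_pos (2 * κ * R)).le
        positivity
      have hMB0 : 0 ≤ MB := by positivity
      have hbd : ∀ y ∈ Set.Icc δ R, |G' y| ≤ (MA + MB) * ((v y) ^ 2 + (deriv v y) ^ 2) := by
        intro y hy
        have hy0 : 0 < y := lt_of_lt_of_le hδ hy.1
        have hsy : 0 < Real.sinh (2 * κ * y) := by rw [Real.sinh_pos_iff]; positivity
        have h1 : Real.sinh (2 * κ * δ) ≤ Real.sinh (2 * κ * y) :=
          Real.sinh_le_sinh.mpr (by nlinarith [hy.1])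
        have h2 : Real.cosh (2 * κ * y) ≤ Real.cosh (2 * κ * R) := by
          rw [Real.cosh_le_cosh, abs_of_nonneg (by positivity), abs_of_nonneg (by nlinarith [hy.2, hy.1])]
          nlinarith [hy.2]
        have hA : 4 * κ ^ 2 * Real.cosh (2 * κ * y) / (Real.sinh (2 * κ * y)) ^ 2 ≤ MA := by
          rw [hMA]
          apply div_le_div₀ (by positivity) (by nlinarith) (by positivity)
          nlinarith
        have hB : 2 * κ / Real.sinh (2 * κ * y) ≤ MB := by
          rw [hMB]
          apply div_le_div₀ (by positivity) le_rfl hsδ h1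
        have hA0 : 0 < 4 * κ ^ 2 * Real.cosh (2 * κ * y) / (Real.sinh (2 * κ * y)) ^ 2 := by
          have := Real.cosh_pos (2 * κ * y); positivity
        have hB0 : 0 < 2 * κ / Real.sinh (2 * κ * y) := by positivity
        have habs : |G' y| ≤ (4 * κ ^ 2 * Real.cosh (2 * κ * y) / (Real.sinh (2 * κ * y)) ^ 2)
            * (v y) ^ 2 + (2 * κ / Real.sinh (2 * κ * y)) * |2 * v y * deriv v y| := by
          simp only [hG'_def]
          calc |(-(4 * κ ^ 2 * Real.cosh (2 * κ * y)) / (Real.sinh (2 * κ * y)) ^ 2 * (v y) ^ 2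
                + 2 * κ / Real.sinh (2 * κ * y) * (2 * v y * deriv v y))|
              ≤ |(-(4 * κ ^ 2 * Real.cosh (2 * κ * y)) / (Real.sinh (2 * κ * y)) ^ 2 * (v y) ^ 2)|
                + |2 * κ / Real.sinh (2 * κ * y) * (2 * v y * deriv v y)| := abs_add_le _ _
            _ = (4 * κ ^ 2 * Real.cosh (2 * κ * y) / (Real.sinh (2 * κ * y)) ^ 2) * (v y) ^ 2
                + (2 * κ / Real.sinh (2 * κ * y)) * |2 * v y * deriv v y| := by
                rw [abs_mul, abs_mul, abs_of_nonneg (sq_nonneg (v y)),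
                  abs_of_nonneg hB0.le, abs_div, abs_neg,
                  abs_of_nonneg (by positivity : (0:ℝ) ≤ 4 * κ ^ 2 * Real.cosh (2 * κ * y)),
                  abs_of_nonneg (by positivity : (0:ℝ) ≤ (Real.sinh (2 * κ * y)) ^ 2)]
        have hvv' : |2 * v y * deriv v y| ≤ (v y) ^ 2 + (deriv v y) ^ 2 := by
          rw [abs_le]; constructor <;> nlinarith [sq_nonneg (v y + deriv v y), sq_nonneg (v y - deriv v y)]
        nlinarith [sq_nonneg (v y), sq_nonneg (deriv v y), mul_le_mul_of_nonneg_left hvv' hB0.le,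
          mul_le_mul_of_nonneg_right hA (sq_nonneg (v y)),
          mul_le_mul_of_nonneg_right hB (abs_nonneg (2 * v y * deriv v y))]
      have hG'int : IntervalIntegrable G' volume δ R := by
        rw [intervalIntegrable_iff_integrableOn_Ioc_of_le hδR]
        refine Integrable.mono'
          (g := fun y => (MA + MB) * ((v y) ^ 2 + (deriv v y) ^ 2)) ?_
          hG'meas.aestronglyMeasurable.restrict ?_
        · exact ((hv2.add hdv2).const_mul _).integrableOn
        · filter_upwards [ae_restrict_mem measurableSet_Ioc] with y hy
          exact hbd y (Set.Ioc_subset_Icc_self hy)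
      have hftc : ∫ y in δ..R, G' y = G R - G δ := by
        apply intervalIntegral.integral_eq_sub_of_hasDerivAt
        · intro y hy
          rw [Set.uIcc_of_le hδR] at hy
          exact hasDerivAt_G κ v hκ hv (hIcc y hy)
        · exact hG'int
      have hf_ii : IntervalIntegrable f volume δ R := hf_int.intervalIntegrable
      have hmono2 : ∫ y in δ..R, G' y ≤ ∫ y in δ..R, f y := by
        apply intervalIntegral.integral_mono_on hδR hG'int hf_ii
        intro y hy
        exact pointwise_ineq κ (hκ := hκ) (hIcc y hy) (v y) (deriv v y)
      linarith
    -- evenness of f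
    have hfeven : ∀ x, f (-x) = f x := by
      intro x
      have h1 := deriv_even_of_odd v hv hodd x
      have h2 := hodd x
      simp only [hf_def, h1, h2]
      rw [show κ * -x = -(κ * x) by ring, Real.cosh_neg]
      ring
    have hint_even : ∀ δ R : ℝ, (∫ y in (-R)..(-δ), f y) = ∫ y in δ..R, f y := by
      intro δ R
      rw [← intervalIntegral.integral_comp_neg f]
      simp only [hfeven]
    -- exhausting sets
    set s : ℕ → Set ℝ := fun n =>
      Set.Ioc (1 / ((n : ℝ) + 1)) ((n : ℝ) + 1) ∪ Set.Ioc (-((n : ℝ) + 1)) (-(1 / ((n : ℝ) + 1)))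
      with hs_def
    have hsm : ∀ n, MeasurableSet (s n) := fun n => measurableSet_Ioc.union measurableSet_Ioc
    have hsmono : Monotone s := by
      intro m n hmn
      have hc : ((m : ℝ) + 1) ≤ (n : ℝ) + 1 := by
        have : (m : ℝ) ≤ n := Nat.cast_le.mpr hmn
        linarith
      have h1 : (1 : ℝ) / ((n : ℝ) + 1) ≤ 1 / ((m : ℝ) + 1) :=
        one_div_le_one_div_of_le (by positivity) hc
      exact Set.union_subset_union (Set.Ioc_subset_Ioc h1 hc)
        (Set.Ioc_subset_Ioc (neg_le_neg hc) (neg_le_neg h1))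
    have hδpos : ∀ n : ℕ, (0 : ℝ) < 1 / ((n : ℝ) + 1) := fun n => by positivity
    have hδR : ∀ n : ℕ, (1 : ℝ) / ((n : ℝ) + 1) ≤ (n : ℝ) + 1 := by
      intro n
      have h1 : (1 : ℝ) ≤ (n : ℝ) + 1 := by
        have : (0:ℝ) ≤ (n:ℝ) := n.cast_nonneg
        linarith
      calc (1 : ℝ) / ((n : ℝ) + 1) ≤ 1 / 1 := one_div_le_one_div_of_le one_pos h1
        _ = 1 := by norm_num
        _ ≤ (n : ℝ) + 1 := h1
    have hU : ∫ x in ⋃ n, s n, f x = ∫ x, f x := by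
      have hae : (⋃ n, s n) =ᵐ[volume] Set.univ := by
        rw [MeasureTheory.ae_eq_univ]
        apply measure_mono_null _ (measure_singleton (0 : ℝ))
        intro x hx
        simp only [Set.mem_compl_iff, Set.mem_iUnion, not_exists] at hx
        simp only [Set.mem_singleton_iff]
        by_contra hx0
        obtain ⟨n, hn⟩ := exists_nat_gt (max |x| (1 / |x|))
        have hxa : 0 < |x| := abs_pos.2 hx0
        have h1 : |x| < (n : ℝ) + 1 := by
          have := le_max_left |x| (1 / |x|); linarith
        have h2 : 1 / ((n : ℝ) + 1) < |x| := by
          have h3 : 1 / |x| < (n : ℝ) + 1 := by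
            have := le_max_right |x| (1 / |x|); linarith
          rw [div_lt_iff₀ hxa] at h3
          rw [div_lt_iff₀ (by positivity : (0:ℝ) < (n : ℝ) + 1)]
          nlinarith
        apply hx n
        rcases lt_or_gt_of_ne hx0 with h | h
        · right
          rw [abs_of_neg h] at h1 h2
          exact ⟨by linarith, by linarith⟩
        · left
          rw [abs_of_pos h] at h1 h2
          exact ⟨by linarith, by linarith⟩
      calc ∫ x in ⋃ n, s n, f x = ∫ x in Set.univ, f x := by
            exact MeasureTheory.setIntegral_congr_set hae
        _ = ∫ x, f x := by rw [MeasureTheory.setIntegral_univ]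
    have hsn_int : ∀ n : ℕ, ∫ x in s n, f x = 2 * ∫ y in (1 / ((n : ℝ) + 1))..((n : ℝ) + 1), f y := by
      intro n
      have hdisj : Disjoint (Set.Ioc (1 / ((n : ℝ) + 1)) ((n : ℝ) + 1))
          (Set.Ioc (-((n : ℝ) + 1)) (-(1 / ((n : ℝ) + 1)))) := by
        rw [Set.disjoint_left]
        intro x hx1 hx2
        have := hx1.1
        have := hx2.2
        have := hδpos n
        linarith
      rw [hs_def]
      rw [MeasureTheory.setIntegral_union hdisj measurableSet_Ioc
        hf_int.integrableOn hf_int.integrableOn]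
      rw [← intervalIntegral.integral_of_le (hδR n),
        ← intervalIntegral.integral_of_le (by linarith [hδR n, (hδpos n).le] :
          -(((n : ℝ) + 1)) ≤ -(1 / ((n : ℝ) + 1)))]
      rw [hint_even]
      ring
    have hlim1 : Filter.Tendsto (fun n : ℕ => ∫ x in s n, f x) Filter.atTop (𝓝 (∫ x, f x)) := by
      have := MeasureTheory.tendsto_setIntegral_of_monotone hsm hsmono hf_int.integrableOn
      rwa [hU] at this
    -- limits of the boundary terms
    have hvv'bd : ∀ x : ℝ, |2 * v x * deriv v x| ≤ (v x) ^ 2 + (deriv v x) ^ 2 := by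
      intro x
      rw [abs_le]
      constructor <;> nlinarith [sq_nonneg (v x + deriv v x), sq_nonneg (v x - deriv v x)]
    have hw : ∀ x : ℝ, HasDerivAt (fun y => (v y) ^ 2) (2 * v x * deriv v x) x := by
      intro x
      have := ((hv x).hasDerivAt).pow 2
      exact this.congr_deriv (by norm_num)
    have hw_meas : Measurable (fun x => 2 * v x * deriv v x) :=
      (measurable_const.mul hvc.measurable).mul hmeasd
    have hw_int : Integrable (fun x => 2 * v x * deriv v x) := by
      refine (hv2.add hdv2).mono' hw_meas.aestronglyMeasurable
        (Filter.Eventually.of_forall fun x => ?_)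
      rw [Real.norm_eq_abs]
      exact hvv'bd x
    have hv2lim : Filter.Tendsto (fun x => (v x) ^ 2) Filter.atTop (𝓝 0) := by
      have hFTC : ∀ R : ℝ, (v R) ^ 2 = (v 1) ^ 2 + ∫ y in (1:ℝ)..R, 2 * v y * deriv v y := by
        intro R
        have h := intervalIntegral.integral_eq_sub_of_hasDerivAt (a := (1:ℝ)) (b := R)
          (f := fun y => (v y) ^ 2)
          (f' := fun y => 2 * v y * deriv v y) (fun y _ => hw y) hw_int.intervalIntegrable
        linarith [h]
      have hIoi : Filter.Tendsto (fun R : ℝ => ∫ y in (1:ℝ)..R, 2 * v y * deriv v y)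
          Filter.atTop (𝓝 (∫ y in Set.Ioi (1:ℝ), 2 * v y * deriv v y)) :=
        MeasureTheory.intervalIntegral_tendsto_integral_Ioi 1 hw_int.integrableOn Filter.tendsto_id
      have hvtend : Filter.Tendsto (fun R => (v R) ^ 2) Filter.atTop
          (𝓝 ((v 1) ^ 2 + ∫ y in Set.Ioi (1:ℝ), 2 * v y * deriv v y)) := by
        refine (tendsto_const_nhds.add hIoi).congr fun R => (hFTC R).symm
      set L := (v 1) ^ 2 + ∫ y in Set.Ioi (1:ℝ), 2 * v y * deriv v y with hL
      have hL0 : L = 0 := by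
        by_contra hLne
        have hLnonneg : 0 ≤ L :=
          ge_of_tendsto hvtend (Filter.Eventually.of_forall fun R => sq_nonneg (v R))
        have hLpos : 0 < L := lt_of_le_of_ne hLnonneg (Ne.symm hLne)
        have hev : ∀ᶠ R in Filter.atTop, L / 2 < (v R) ^ 2 :=
          hvtend.eventually (eventually_gt_nhds (by linarith))
        obtain ⟨M, hM⟩ := hev.exists_forall_of_atTop
        have hcint : IntegrableOn (fun _ : ℝ => L / 2) (Set.Ici M) := by
          refine (hv2.integrableOn).mono' aestronglyMeasurable_const ?_
          filter_upwards [ae_restrict_mem measurableSet_Ici] with x hx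
          rw [Real.norm_eq_abs, abs_of_nonneg (by linarith)]
          exact (hM x hx).le
        rw [integrableOn_const_iff] at hcint
        rcases hcint with h | h
        · simp at h; linarith
        · rw [Real.volume_Ici] at h
          exact (lt_irrefl _ h).elim
      rw [hL0] at hvtend
      exact hvtend
    have hGR : Filter.Tendsto (fun n : ℕ => G ((n : ℝ) + 1)) Filter.atTop (𝓝 0) := by
      have h1 : Filter.Tendsto (fun R : ℝ => 2 * κ * R) Filter.atTop Filter.atTop :=
        Filter.Tendsto.const_mul_atTop (by positivity) Filter.tendsto_id
      have h2 : ∀ᶠ R in Filter.atTop, 2 * κ * R ≤ Real.sinh (2 * κ * R) := by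
        filter_upwards [Filter.eventually_gt_atTop (0:ℝ)] with R hR
        exact (Real.self_lt_sinh_iff.mpr (by positivity)).le
      have hsinh_top : Filter.Tendsto (fun R : ℝ => Real.sinh (2 * κ * R))
          Filter.atTop Filter.atTop := Filter.tendsto_atTop_mono' _ h2 h1
      have hinv : Filter.Tendsto (fun R : ℝ => 2 * κ / Real.sinh (2 * κ * R))
          Filter.atTop (𝓝 0) := by
        have h3 := hsinh_top.inv_tendsto_atTop
        have h4 := h3.const_mul (2 * κ)
        simpa [div_eq_mul_inv] using h4
      have hcomp : Filter.Tendsto (fun n : ℕ => ((n : ℝ) + 1)) Filter.atTop Filter.atTop :=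
        Filter.tendsto_atTop_add_const_right _ 1 tendsto_natCast_atTop_atTop
      have := (hinv.comp hcomp).mul (hv2lim.comp hcomp)
      simpa [Function.comp, hG_def] using this
    have hGδ : Filter.Tendsto (fun n : ℕ => G (1 / ((n : ℝ) + 1))) Filter.atTop (𝓝 0) := by
      have hδ0 : Filter.Tendsto (fun n : ℕ => 1 / ((n : ℝ) + 1)) Filter.atTop (𝓝 0) :=
        tendsto_one_div_add_atTop_nhds_zero_nat
      have hslope : Filter.Tendsto (fun y : ℝ => v y / y) (𝓝[≠] (0:ℝ)) (𝓝 (deriv v 0)) := by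
        have h := (hv 0).hasDerivAt
        rw [hasDerivAt_iff_tendsto_slope] at h
        refine h.congr fun y => ?_
        simp [slope_def_field, hv0]
      have hseq : Filter.Tendsto (fun n : ℕ => 1 / ((n : ℝ) + 1)) Filter.atTop (𝓝[≠] (0:ℝ)) := by
        apply tendsto_nhdsWithin_of_tendsto_nhds_of_eventually_within _ hδ0
        exact Filter.Eventually.of_forall fun n => (hδpos n).ne'
      have hs2 : Filter.Tendsto (fun n : ℕ => v (1 / ((n : ℝ) + 1)) / (1 / ((n : ℝ) + 1)))
          Filter.atTop (𝓝 (deriv v 0)) := hslope.comp hseq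
      have hupper : Filter.Tendsto (fun n : ℕ =>
          (1 / ((n : ℝ) + 1)) * (v (1 / ((n : ℝ) + 1)) / (1 / ((n : ℝ) + 1))) ^ 2)
          Filter.atTop (𝓝 0) := by
        have := hδ0.mul ((hs2.pow 2))
        simpa using this
      apply squeeze_zero (g := fun n : ℕ =>
          (1 / ((n : ℝ) + 1)) * (v (1 / ((n : ℝ) + 1)) / (1 / ((n : ℝ) + 1))) ^ 2) ?_ ?_ hupper
      · intro n
        have hδn := hδpos n
        have hsp : 0 < Real.sinh (2 * κ * (1 / ((n : ℝ) + 1))) := by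
          rw [Real.sinh_pos_iff]; positivity
        simp only [hG_def]
        positivity
      · intro n
        have hδn := hδpos n
        set δ := 1 / ((n : ℝ) + 1) with hδdef
        have hsp : 0 < Real.sinh (2 * κ * δ) := by rw [Real.sinh_pos_iff]; positivity
        have hle : 2 * κ * δ ≤ Real.sinh (2 * κ * δ) :=
          (Real.self_lt_sinh_iff.mpr (by positivity)).le
        have h5 : 2 * κ / Real.sinh (2 * κ * δ) ≤ 2 * κ / (2 * κ * δ) :=
          div_le_div_of_nonneg_left (by positivity) (by positivity) hle
        have h6 : G δ ≤ (2 * κ / (2 * κ * δ)) * (v δ) ^ 2 := by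
          simp only [hG_def]
          exact mul_le_mul_of_nonneg_right h5 (sq_nonneg _)
        have h7 : (2 * κ / (2 * κ * δ)) * (v δ) ^ 2 = δ * (v δ / δ) ^ 2 := by
          field_simp
        rw [h7] at h6
        exact h6
    have hGlim : Filter.Tendsto
        (fun n : ℕ => 2 * (G ((n : ℝ) + 1) - G (1 / ((n : ℝ) + 1)))) Filter.atTop (𝓝 0) := by
      have := (hGR.sub hGδ).const_mul (2 : ℝ)
      simpa using this
    refine le_of_tendsto_of_tendsto' hGlim hlim1 fun n => ?_
    rw [hsn_int n]
    have := interval_bd (1 / ((n : ℝ) + 1)) ((n : ℝ) + 1) (hδpos n) (hδR n)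
    linarith
  have := key
  rw [hf_def] at this
  rw [integral_sub hdv2 (hρ_int.const_mul _), MeasureTheory.integral_const_mul] at this
  linarith

/-- Stability of the repulsivity condition (Hypothesis 3) under small perturbations:
if (1−γ)∫(v')² ≥ −(1/2)∫ x P₂' v² for all odd v ∈ H¹, |P₂'| ≤ C e^{−10κ|x|}, and
|xQ(x)| ≤ ε sech⁴(κx) with ε ≤ γ·2κ², then (1−γ/2)∫(v')² ≥ −(1/2)∫ x(P₂'+Q) v². -/
theorem repulsivity_stability (γ κ C ε : ℝ) (P₂' Q : ℝ → ℝ)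
    (hγ : γ ∈ Set.Ioo (0 : ℝ) 1) (hκ : 0 < κ) (hC : 0 < C)
    (hPcont : Continuous P₂')
    (hPdec : ∀ x, |P₂' x| ≤ C * Real.exp (-(5 * (2 * κ)) * |x|))
    (hrep : ∀ v : ℝ → ℝ, Differentiable ℝ v → (∀ x, v (-x) = -v x) →
      Integrable (fun x => (v x) ^ 2) → Integrable (fun x => (deriv v x) ^ 2) →
      (1 - γ) * ∫ x, (deriv v x) ^ 2 ≥ -(1 / 2) * ∫ x, x * P₂' x * (v x) ^ 2)
    (hQcont : Continuous Q) (hε : 0 < ε)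
    (hQbd : ∀ x, |x * Q x| ≤ ε * (1 / Real.cosh (κ * x)) ^ 4)
    (hεsmall : ε ≤ γ * (2 * κ ^ 2)) :
    ∀ v : ℝ → ℝ, Differentiable ℝ v → (∀ x, v (-x) = -v x) →
      Integrable (fun x => (v x) ^ 2) → Integrable (fun x => (deriv v x) ^ 2) →
      (1 - γ / 2) * ∫ x, (deriv v x) ^ 2
        ≥ -(1 / 2) * ∫ x, x * (P₂' x + Q x) * (v x) ^ 2 := by
  intro v hv hodd hv2 hdv2
  have hvc : Continuous v := hv.continuous
  have h1 := hrep v hv hodd hv2 hdv2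
  have hpoin := poincare_odd κ v hκ hv hodd hv2 hdv2
  -- integrability of ρ v²
  have hρc : Continuous fun x : ℝ => (1 / Real.cosh (κ * x)) ^ 2 * (v x) ^ 2 := by
    apply Continuous.mul _ (hvc.pow 2)
    exact ((continuous_const.div (Real.continuous_cosh.comp (continuous_const.mul continuous_id))
      (fun x => (Real.cosh_pos _).ne')).pow 2)
  have hsech_le : ∀ x : ℝ, 0 < 1 / Real.cosh (κ * x) ∧ 1 / Real.cosh (κ * x) ≤ 1 := by
    intro x
    have h1 : (1:ℝ) ≤ Real.cosh (κ * x) := Real.one_le_cosh _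
    have h2 : (0:ℝ) < Real.cosh (κ * x) := Real.cosh_pos _
    constructor
    · positivity
    · rw [div_le_one h2]; exact h1
  have hρ_int : Integrable (fun x : ℝ => (1 / Real.cosh (κ * x)) ^ 2 * (v x) ^ 2) := by
    refine hv2.mono' hρc.aestronglyMeasurable (Filter.Eventually.of_forall fun x => ?_)
    obtain ⟨hc0, hc1⟩ := hsech_le x
    have hc2 : (1 / Real.cosh (κ * x)) ^ 2 ≤ 1 := pow_le_one₀ hc0.le hc1
    rw [Real.norm_eq_abs,
      abs_of_nonneg (by positivity : (0:ℝ) ≤ (1 / Real.cosh (κ * x)) ^ 2 * (v x) ^ 2)]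
    nlinarith [mul_le_mul_of_nonneg_right hc2 (sq_nonneg (v x))]
  -- integrability of x P₂' v² and x Q v²
  have hxP_bd : ∀ x : ℝ, |x * P₂' x| ≤ C / (10 * κ) := by
    intro x
    have h2 := hPdec x
    have h3 : 10 * κ * |x| ≤ Real.exp (10 * κ * |x|) := by
      linarith [Real.add_one_le_exp (10 * κ * |x|)]
    have h4 : Real.exp (-(5 * (2 * κ)) * |x|) = (Real.exp (10 * κ * |x|))⁻¹ := by
      rw [← Real.exp_neg]; ring_nf
    have hex : 0 < Real.exp (10 * κ * |x|) := Real.exp_pos _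
    rw [abs_mul]
    rw [h4] at h2
    have h5 : |P₂' x| ≤ C / Real.exp (10 * κ * |x|) := by
      rw [div_eq_mul_inv]; exact h2
    calc |x| * |P₂' x| ≤ |x| * (C / Real.exp (10 * κ * |x|)) :=
          mul_le_mul_of_nonneg_left h5 (abs_nonneg x)
      _ = C * (|x| / Real.exp (10 * κ * |x|)) := by ring
      _ ≤ C * (1 / (10 * κ)) := by
          apply mul_le_mul_of_nonneg_left _ hC.le
          rw [div_le_div_iff₀ hex (by positivity)]
          nlinarith [h3]
      _ = C / (10 * κ) := by ring
  have hxPc : Continuous fun x : ℝ => x * P₂' x * (v x) ^ 2 :=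
    (continuous_id.mul hPcont).mul (hvc.pow 2)
  have hxQc : Continuous fun x : ℝ => x * Q x * (v x) ^ 2 :=
    (continuous_id.mul hQcont).mul (hvc.pow 2)
  have hxP_int : Integrable (fun x : ℝ => x * P₂' x * (v x) ^ 2) := by
    refine (hv2.const_mul (C / (10 * κ))).mono' hxPc.aestronglyMeasurable
      (Filter.Eventually.of_forall fun x => ?_)
    rw [Real.norm_eq_abs, abs_mul, abs_of_nonneg (sq_nonneg (v x))]
    exact mul_le_mul_of_nonneg_right (hxP_bd x) (sq_nonneg _)
  have hxQ_bd : ∀ x : ℝ, |x * Q x| ≤ ε := by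
    intro x
    obtain ⟨hc0, hc1⟩ := hsech_le x
    have h2 := hQbd x
    have hc4 : (1 / Real.cosh (κ * x)) ^ 4 ≤ 1 := pow_le_one₀ hc0.le hc1
    nlinarith
  have hxQ_int : Integrable (fun x : ℝ => x * Q x * (v x) ^ 2) := by
    refine (hv2.const_mul ε).mono' hxQc.aestronglyMeasurable
      (Filter.Eventually.of_forall fun x => ?_)
    rw [Real.norm_eq_abs, abs_mul, abs_of_nonneg (sq_nonneg (v x))]
    exact mul_le_mul_of_nonneg_right (hxQ_bd x) (sq_nonneg _)
  have hsplit : ∫ x, x * (P₂' x + Q x) * (v x) ^ 2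
      = (∫ x, x * P₂' x * (v x) ^ 2) + ∫ x, x * Q x * (v x) ^ 2 := by
    rw [← integral_add hxP_int hxQ_int]
    apply integral_congr_ae
    filter_upwards with x
    ring
  have hQpt : ∀ x : ℝ, -(x * Q x * (v x) ^ 2)
      ≤ γ * (2 * κ ^ 2) * ((1 / Real.cosh (κ * x)) ^ 2 * (v x) ^ 2) := by
    intro x
    obtain ⟨hc0, hc1⟩ := hsech_le x
    have h2 := hQbd x
    have hc2 : (1 / Real.cosh (κ * x)) ^ 2 ≤ 1 := pow_le_one₀ hc0.le hc1
    have hc4 : (1 / Real.cosh (κ * x)) ^ 4 ≤ (1 / Real.cosh (κ * x)) ^ 2 := by nlinarith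
    have h3 : -(x * Q x) ≤ ε * (1 / Real.cosh (κ * x)) ^ 2 := by
      nlinarith [neg_abs_le (x * Q x), mul_le_mul_of_nonneg_left hc4 hε.le]
    have h4 : -(x * Q x) ≤ γ * (2 * κ ^ 2) * (1 / Real.cosh (κ * x)) ^ 2 := by
      nlinarith [mul_le_mul_of_nonneg_right hεsmall (by positivity : (0:ℝ) ≤ (1 / Real.cosh (κ * x)) ^ 2)]
    nlinarith [mul_le_mul_of_nonneg_right h4 (sq_nonneg (v x))]
  have hQint : -∫ x, x * Q x * (v x) ^ 2
      ≤ γ * (2 * κ ^ 2) * ∫ x, (1 / Real.cosh (κ * x)) ^ 2 * (v x) ^ 2 := by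
    rw [← MeasureTheory.integral_neg, ← MeasureTheory.integral_const_mul]
    exact integral_mono hxQ_int.neg (hρ_int.const_mul _) hQpt
  have hfinal : -∫ x, x * Q x * (v x) ^ 2 ≤ γ * ∫ x, (deriv v x) ^ 2 := by
    have h5 := mul_le_mul_of_nonneg_left hpoin hγ.1.le
    nlinarith [hQint]
  rw [hsplit]
  linarith [h1, hfinal]
end
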